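/- Let R be an expanding edge replacement system and Gl_R its gluing automaton. If an infinite sequence (x₀,y₀)(x₁,y₁)… is recognized by Gl_R, then exactly one of the following holds: (1) x_i=y_i for all i and the run stays in the sub-automaton T_R induced by Q₀; or (2) the run of (x₀,y₀)(x₁,y₁)… features exactly one Type 1 transition, which takes place when processing the first letter (x_m,y_m) with x_m≠y_m; moreover, in case (2) the edges x₀…x_m and y₀…y_m are adjacent in the full expansion E_m, and the state of Gl_R after processing (x_m,y_m) is q₁(c(x_m),α;c(y_m),β), where (α,β) is the adjacency type of x₀…x_m and y₀…y_m in E_m in the sense of the Type 1 rule. -/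
import Mathlib


/-!
Formalization of edge replacement systems, their limit-space gluing relation,
and the gluing automaton, following Belk–Forrest and the paper
"Rationality of the gluing of edge replacement systems".
-/

namespace ERSPaper

/-- The five adjacency-type symbols `in`, `out`, `lp`, `db⁺`, `db⁻`. -/
inductive EType : Type
  | inn : EType
  | out : EType
  | lp : EType
  | dbp : EType
  | dbm : EType
  deriving DecidableEq

/-- An edge replacement system satisfying the loop-color assumption.
`V z` / `E z` are the vertices/edges of the base graph (`z = none`) or of the
replacement graph `Γ c` (`z = some c`).  For loop colors the two boundary
vertices coincide (the single boundary vertex `λ_c`); for non-loop colors they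
are distinct.  The field `loop_iff` is the loop-color assumption: an edge is a
loop if and only if its color is a loop color. -/
structure ERS : Type 1 where
  Col : Type
  [colFintype : Fintype Col]
  [colDecEq : DecidableEq Col]
  V : Option Col → Type
  E : Option Col → Type
  [vFintype : ∀ z, Fintype (V z)]
  [eFintype : ∀ z, Fintype (E z)]
  [vDecEq : ∀ z, DecidableEq (V z)]
  ini : ∀ z, E z → V z
  fin : ∀ z, E z → V z
  col : ∀ z, E z → Col
  loopCol : Col → Prop
  bIni : ∀ c : Col, V (some c)
  bFin : ∀ c : Col, V (some c)
  bd_eq_iff : ∀ c : Col, (bIni c = bFin c ↔ loopCol c)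
  loop_iff : ∀ z (e : E z), (ini z e = fin z e ↔ loopCol (col z e))

attribute [instance] ERS.colFintype ERS.colDecEq ERS.vFintype ERS.eFintype ERS.vDecEq

namespace ERS

/-- The alphabet `Σ`: the disjoint union of the edge sets of the base graph and
of all the replacement graphs. -/
def Alph (R : ERS) : Type := Σ z : Option R.Col, R.E z

/-- Membership in the symbol space `Ω_R`: infinite directed walks on the color
graph starting at `q(0)`, i.e. `x₀` is an edge of the base graph and `x_{l+1}`
is an edge of `Γ_{c(x_l)}`. -/
def IsWalk (R : ERS) (x : ℕ → R.Alph) : Prop :=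
  (x 0).1 = none ∧ ∀ l : ℕ, (x (l + 1)).1 = some (R.col (x l).1 (x l).2)

/-- The finite word `x₀ … x_m` belongs to `E_R`. -/
def IsWalkUpTo (R : ERS) (x : ℕ → R.Alph) (m : ℕ) : Prop :=
  (x 0).1 = none ∧ ∀ l : ℕ, l < m → (x (l + 1)).1 = some (R.col (x l).1 (x l).2)

theorem IsWalk.upTo {R : ERS} {x : ℕ → R.Alph} (hx : R.IsWalk x) (m : ℕ) :
    R.IsWalkUpTo x m :=
  ⟨hx.1, fun l _ => hx.2 l⟩

end ERS

/-- A finite graph whose edges are colored by the colors of `R`. -/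
structure GraphData (R : ERS) : Type 1 where
  V : Type
  E : Type
  ι : E → V
  τ : E → V
  col : E → R.Col

/-- An edge is incident on a vertex. -/
def GraphData.IncidentOn {R : ERS} (G : GraphData R) (e : G.E) (v : G.V) : Prop :=
  G.ι e = v ∨ G.τ e = v

/-- Two edges are incident on a common vertex. -/
def GraphData.Adjacent {R : ERS} (G : GraphData R) (e f : G.E) : Prop :=
  ∃ v : G.V, G.IncidentOn e v ∧ G.IncidentOn f v

namespace ERS

/-- When expanding the edge `e`, a vertex `v` of the replacement graph
`Γ_{c(e)}` is attached: boundary vertices go to the endpoints of `e`,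
interior vertices give fresh vertices. -/
def attach (R : ERS) (G : GraphData R) (e : G.E) (v : R.V (some (G.col e))) :
    G.V ⊕ (Σ e : G.E,
      {v : R.V (some (G.col e)) // v ≠ R.bIni (G.col e) ∧ v ≠ R.bFin (G.col e)}) :=
  if h1 : v = R.bIni (G.col e) then Sum.inl (G.ι e)
  else if h2 : v = R.bFin (G.col e) then Sum.inl (G.τ e)
  else Sum.inr ⟨e, v, h1, h2⟩

/-- The simultaneous expansion of every edge of `G`. -/
def expandG (R : ERS) (G : GraphData R) : GraphData R where
  V := G.V ⊕ (Σ e : G.E,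
    {v : R.V (some (G.col e)) // v ≠ R.bIni (G.col e) ∧ v ≠ R.bFin (G.col e)})
  E := Σ e : G.E, R.E (some (G.col e))
  ι := fun p => R.attach G p.1 (R.ini (some (G.col p.1)) p.2)
  τ := fun p => R.attach G p.1 (R.fin (some (G.col p.1)) p.2)
  col := fun p => R.col (some (G.col p.1)) p.2

/-- The base graph, as graph data. -/
def base (R : ERS) : GraphData R :=
  ⟨R.V none, R.E none, R.ini none, R.fin none, R.col none⟩

/-- The full expansion sequence `E_m`. -/
def fullExp (R : ERS) : ℕ → GraphData R
  | 0 => R.base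
  | m + 1 => R.expandG (R.fullExp m)

theorem col_cast (R : ERS) (p : R.Alph) (z : Option R.Col) (h : p.1 = z) :
    R.col z (cast (congrArg R.E h) p.2) = R.col p.1 p.2 := by
  rcases p with ⟨w, e⟩
  cases h
  rfl

/-- The edge of the full expansion `E_m` labeled by the word `x₀ … x_m`,
together with the fact that its color is the color of its last letter. -/
def wordEdge (R : ERS) (x : ℕ → R.Alph) :
    (m : ℕ) → R.IsWalkUpTo x m →
      {e : (R.fullExp m).E // (R.fullExp m).col e = R.col (x m).1 (x m).2}
  | 0, hx => ⟨cast (congrArg R.E hx.1) (x 0).2, R.col_cast (x 0) none hx.1⟩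
  | m + 1, hx =>
    let prev := R.wordEdge x m ⟨hx.1, fun l hl => hx.2 l (Nat.lt_succ_of_lt hl)⟩
    let h : (x (m + 1)).1 = some ((R.fullExp m).col prev.1) :=
      (hx.2 m (Nat.lt_succ_self m)).trans (congrArg some prev.2.symm)
    ⟨⟨prev.1, cast (congrArg R.E h) (x (m + 1)).2⟩, R.col_cast (x (m + 1)) _ h⟩

/-- The gluing relation: two elements of `Ω_R` are glued when, for every large
enough `n`, their length-`(n+1)` prefixes are incident on a common vertex of
the full expansion `E_n`. -/
def Glued (R : ERS) (x y : ℕ → R.Alph) (hx : R.IsWalk x) (hy : R.IsWalk y) : Prop :=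
  ∃ N : ℕ, ∀ n : ℕ, N ≤ n →
    (R.fullExp n).Adjacent (R.wordEdge x n (hx.upTo n)).1 (R.wordEdge y n (hy.upTo n)).1

/-- The expanding condition on a replacement system (formulated after the
identification of the boundary vertices for loop colors). -/
structure Expanding (R : ERS) : Prop where
  no_isolated : ∀ z (v : R.V z), ∃ e : R.E z, R.ini z e = v ∨ R.fin z e = v
  no_bd_edge : ∀ c : R.Col, ¬ R.loopCol c → ∀ e : R.E (some c),
    ¬ ((R.ini (some c) e = R.bIni c ∧ R.fin (some c) e = R.bFin c) ∨
       (R.ini (some c) e = R.bFin c ∧ R.fin (some c) e = R.bIni c))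
  two_edges : ∀ c : R.Col, 2 ≤ Fintype.card (R.E (some c))
  interior : ∀ c : R.Col, ∃ v : R.V (some c), v ≠ R.bIni c ∧ v ≠ R.bFin c

end ERS

/-- `EndAt ι τ v α` : the edge with initial vertex `ι` and terminal vertex `τ`
is incident on `v`, in the fashion recorded by `α`: incoming (`in`), outgoing
(`out`) or a loop (`lp`). -/
inductive EndAt {V : Type} : V → V → V → EType → Prop
  | inn {i v : V} : i ≠ v → EndAt i v v .inn
  | out {t v : V} : v ≠ t → EndAt v t v .out
  | lp {v : V} : EndAt v v v .lp

/-- Two non-loop edges (given by their endpoints) are parallel. -/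
def Parallel {V : Type} (ia ta ib tb : V) : Prop :=
  ia ≠ ta ∧ ((ia = ib ∧ ta = tb) ∨ (ia = tb ∧ ta = ib))

/-- The Type 1 adjacency-type rule for two distinct adjacent edges, given by
their endpoints: parallel non-loops give the `db` types (same or opposite
orientation), and otherwise the unique common vertex `v` determines the types
via `EndAt`. -/
inductive AdjType {V : Type} : V → V → V → V → EType → EType → Prop
  | dbSame {u v : V} : u ≠ v → AdjType u v u v .dbp .dbp
  | dbOpp {u v : V} : u ≠ v → AdjType u v v u .dbp .dbm
  | single {ia ta ib tb v : V} {α β : EType} :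
      ¬ Parallel ia ta ib tb → EndAt ia ta v α → EndAt ib tb v β →
      AdjType ia ta ib tb α β

/-- The states of the gluing automaton `Gl_R`. -/
inductive GlState (R : ERS) : Type
  | q0 : Option R.Col → GlState R
  | q1 : R.Col → EType → R.Col → EType → GlState R

/-- Membership in `Q₀`. -/
def GlState.inQ0 {R : ERS} : GlState R → Prop
  | .q0 _ => True
  | _ => False

/-- Membership in `Q₁`. -/
def GlState.inQ1 {R : ERS} : GlState R → Prop
  | .q1 _ _ _ _ => True
  | _ => False

/-- The defining conditions for states of `Q₁`: `γ ≠ db⁻` and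
(`δ ∈ {db⁺, db⁻}` iff `γ = db⁺`). -/
def GlState.Valid {R : ERS} : GlState R → Prop
  | .q0 _ => True
  | .q1 _ γ _ δ => γ ≠ .dbm ∧ ((δ = .dbp ∨ δ = .dbm) ↔ γ = .dbp)

/-- The tracked boundary vertex of `Γ_c` for a non-`db` symbol:
`τ_c` for `in`, `ι_c` for `out`, and `λ_c` (the identified boundary vertex)
for `lp`. -/
def trackedV (R : ERS) (c : R.Col) : EType → Set (R.V (some c))
  | .inn => {R.bFin c}
  | .out => {R.bIni c}
  | .lp => {R.bIni c}
  | _ => ∅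

/-- The pairs of tracked vertices of a state `q₁(i,γ;j,δ)`. -/
inductive TrackedPair (R : ERS) (i j : R.Col) :
    EType → EType → R.V (some i) → R.V (some j) → Prop
  | nondb {γ δ : EType} {u : R.V (some i)} {w : R.V (some j)} :
      u ∈ trackedV R i γ → w ∈ trackedV R j δ → TrackedPair R i j γ δ u w
  | dbppIni : TrackedPair R i j .dbp .dbp (R.bIni i) (R.bIni j)
  | dbppFin : TrackedPair R i j .dbp .dbp (R.bFin i) (R.bFin j)
  | dbpmIni : TrackedPair R i j .dbp .dbm (R.bIni i) (R.bFin j)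
  | dbpmFin : TrackedPair R i j .dbp .dbm (R.bFin i) (R.bIni j)

/-- The transitions of the gluing automaton `Gl_R`. -/
inductive GlTrans (R : ERS) : GlState R → R.Alph × R.Alph → GlState R → Prop
  | type0 (z : Option R.Col) (e : R.E z) :
      GlTrans R (.q0 z) (⟨z, e⟩, ⟨z, e⟩) (.q0 (some (R.col z e)))
  | type1 (z : Option R.Col) (a b : R.E z) (hab : a ≠ b) {α β : EType}
      (h : AdjType (R.ini z a) (R.fin z a) (R.ini z b) (R.fin z b) α β) :
      GlTrans R (.q0 z) (⟨z, a⟩, ⟨z, b⟩) (.q1 (R.col z a) α (R.col z b) β)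
  | type2 (i j : R.Col) (γ δ : EType) (a : R.E (some i)) (b : R.E (some j))
      {u : R.V (some i)} {w : R.V (some j)}
      (hp : TrackedPair R i j γ δ u w) {α β : EType}
      (ha : EndAt (R.ini (some i) a) (R.fin (some i) a) u α)
      (hb : EndAt (R.ini (some j) b) (R.fin (some j) b) w β) :
      GlTrans R (.q1 i γ j δ) (⟨some i, a⟩, ⟨some j, b⟩)
        (.q1 (R.col (some i) a) α (R.col (some j) b) β)

/-- Infinite runs of `Gl_R` from the initial state `q₀(0)`. -/
def GlRun (R : ERS) (w : ℕ → R.Alph × R.Alph) (q : ℕ → GlState R) : Prop :=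
  q 0 = .q0 none ∧ ∀ l : ℕ, GlTrans R (q l) (w l) (q (l + 1))

/-- `Gl_R` recognizes the infinite sequence `w`. -/
def GlAccepts (R : ERS) (w : ℕ → R.Alph × R.Alph) : Prop :=
  ∃ q : ℕ → GlState R, GlRun R w q

/-- Finite runs of `Gl_R` processing the letters `w 0, …, w m`. -/
def GlRunFin (R : ERS) (w : ℕ → R.Alph × R.Alph) (m : ℕ) (q : ℕ → GlState R) : Prop :=
  q 0 = .q0 none ∧ ∀ l : ℕ, l ≤ m → GlTrans R (q l) (w l) (q (l + 1))

/-- `Gl_R` recognizes the finite word `w 0, …, w m`. -/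
def GlAcceptsFin (R : ERS) (w : ℕ → R.Alph × R.Alph) (m : ℕ) : Prop :=
  ∃ q : ℕ → GlState R, GlRunFin R w m q

/-- The transitions of the full sub-automaton `T_R` induced by `Q₀`. -/
def TTrans (R : ERS) (s : GlState R) (p : R.Alph × R.Alph) (t : GlState R) : Prop :=
  GlTrans R s p t ∧ s.inQ0 ∧ t.inQ0

/-- Finite runs of `T_R` processing the letters `w 0, …, w m`. -/
def TRunFin (R : ERS) (w : ℕ → R.Alph × R.Alph) (m : ℕ) (q : ℕ → GlState R) : Prop :=
  q 0 = .q0 none ∧ ∀ l : ℕ, l ≤ m → TTrans R (q l) (w l) (q (l + 1))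

/-- `T_R` recognizes the finite word `w 0, …, w m`. -/
def TAcceptsFin (R : ERS) (w : ℕ → R.Alph × R.Alph) (m : ℕ) : Prop :=
  ∃ q : ℕ → GlState R, TRunFin R w m q

end ERSPaper

namespace ERSPaper



section Aux
variable {R : ERS}

lemma EndAt.map {V W : Type} (f : V → W) (hf : Function.Injective f)
    {i t v : V} {α : EType} (h : EndAt i t v α) : EndAt (f i) (f t) (f v) α := by
  cases h with
  | inn h => exact .inn (fun e => h (hf e))
  | out h => exact .out (fun e => h (hf e))
  | lp => exact .lp

lemma AdjType.map {V W : Type} (f : V → W) (hf : Function.Injective f)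
    {ia ta ib tb : V} {α β : EType} (h : AdjType ia ta ib tb α β) :
    AdjType (f ia) (f ta) (f ib) (f tb) α β := by
  cases h with
  | dbSame h => exact .dbSame (fun e => h (hf e))
  | dbOpp h => exact .dbOpp (fun e => h (hf e))
  | single hnp ha hb =>
      refine .single ?_ (ha.map f hf) (hb.map f hf)
      rintro ⟨h1, h2⟩
      refine hnp ⟨fun e => h1 (congrArg f e), ?_⟩
      rcases h2 with ⟨e1, e2⟩ | ⟨e1, e2⟩
      · exact Or.inl ⟨hf e1, hf e2⟩
      · exact Or.inr ⟨hf e1, hf e2⟩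

lemma EndAt.eq_or_eq {V : Type} {i t v : V} {α : EType} (h : EndAt i t v α) :
    i = v ∨ t = v := by
  cases h with
  | inn h => exact Or.inr rfl
  | out h => exact Or.inl rfl
  | lp => exact Or.inl rfl

lemma AdjType.common {V : Type} {ia ta ib tb : V} {α β : EType}
    (h : AdjType ia ta ib tb α β) :
    ∃ v, (ia = v ∨ ta = v) ∧ (ib = v ∨ tb = v) := by
  cases h with
  | dbSame h => exact ⟨ia, Or.inl rfl, Or.inl rfl⟩
  | dbOpp h => exact ⟨ia, Or.inl rfl, Or.inr rfl⟩
  | single hnp ha hb => exact ⟨_, ha.eq_or_eq, hb.eq_or_eq⟩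

lemma GraphData.adjacent_of_adjType (G : GraphData R) {a b : G.E}
    {α β : EType} (h : AdjType (G.ι a) (G.τ a) (G.ι b) (G.τ b) α β) :
    G.Adjacent a b := h.common

end Aux

section Aux2
variable {R : ERSPaper.ERS}
open ERSPaper

/-- The good-graph property: loops exactly at loop colors. -/
def GoodG (G : GraphData R) : Prop :=
  ∀ e : G.E, (G.ι e = G.τ e ↔ R.loopCol (G.col e))

lemma attach_injective {G : GraphData R} (hG : GoodG G) (e : G.E) :
    Function.Injective (R.attach G e) := by
  intro v v' h
  unfold ERSPaper.ERS.attach at h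
  by_cases a1 : v = R.bIni (G.col e)
  · rw [dif_pos a1] at h
    by_cases b1 : v' = R.bIni (G.col e)
    · exact a1.trans b1.symm
    · rw [dif_neg b1] at h
      by_cases b2 : v' = R.bFin (G.col e)
      · rw [dif_pos b2] at h
        have hiota : G.ι e = G.τ e := Sum.inl.inj h
        have hb : R.bIni (G.col e) = R.bFin (G.col e) :=
          (R.bd_eq_iff _).mpr ((hG e).mp hiota)
        exact a1.trans (hb.trans b2.symm)
      · rw [dif_neg b2] at h; exact absurd h (by simp)
  · rw [dif_neg a1] at h
    by_cases a2 : v = R.bFin (G.col e)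
    · rw [dif_pos a2] at h
      by_cases b1 : v' = R.bIni (G.col e)
      · rw [dif_pos b1] at h
        have hiota : G.ι e = G.τ e := (Sum.inl.inj h).symm
        have hb := (R.bd_eq_iff (G.col e)).mpr ((hG e).mp hiota)
        exact a2.trans (hb.symm.trans b1.symm)
      · rw [dif_neg b1] at h
        by_cases b2 : v' = R.bFin (G.col e)
        · rw [dif_pos b2] at h
          exact a2.trans b2.symm
        · rw [dif_neg b2] at h; exact absurd h (by simp)
    · rw [dif_neg a2] at h
      by_cases b1 : v' = R.bIni (G.col e)
      · rw [dif_pos b1] at h; exact absurd h (by simp)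
      · rw [dif_neg b1] at h
        by_cases b2 : v' = R.bFin (G.col e)
        · rw [dif_pos b2] at h; exact absurd h (by simp)
        · rw [dif_neg b2] at h
          have h2 := Sum.inr.inj h
          injection h2 with h3 h4
          exact congrArg Subtype.val h4

lemma goodG_expand {G : GraphData R} (hG : GoodG G) : GoodG (R.expandG G) := by
  rintro ⟨e, b⟩
  show R.attach G e (R.ini _ b) = R.attach G e (R.fin _ b) ↔
    R.loopCol (R.col (some (G.col e)) b)
  constructor
  · intro h
    exact (R.loop_iff _ b).mp (attach_injective hG e h)
  · intro h
    exact congrArg (R.attach G e) ((R.loop_iff _ b).mpr h)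

lemma goodG_fullExp (m : ℕ) : GoodG (R.fullExp m) := by
  induction m with
  | zero => exact fun e => R.loop_iff none e
  | succ m ih => exact goodG_expand ih
end Aux2
section Aux3
open ERSPaper
variable {R : ERSPaper.ERS}

lemma cast_inj_fun {A B : Type} (h : A = B) : Function.Injective (cast h) := by
  intro u v huv; cases h; exact huv

lemma ini_cast' (R : ERSPaper.ERS) {z z' : Option R.Col} (h : z = z') (a : R.E z) :
    R.ini z' (cast (congrArg R.E h) a) = cast (congrArg R.V h) (R.ini z a) := by
  cases h; rfl

lemma fin_cast' (R : ERSPaper.ERS) {z z' : Option R.Col} (h : z = z') (a : R.E z) :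
    R.fin z' (cast (congrArg R.E h) a) = cast (congrArg R.V h) (R.fin z a) := by
  cases h; rfl

lemma cast_snd_congr (R : ERSPaper.ERS) (p q : R.Alph) (hpq : p = q)
    (h1 : p.1 = none) (h2 : q.1 = none) :
    cast (congrArg R.E h1) p.2 = cast (congrArg R.E h2) q.2 := by
  subst hpq; rfl

lemma mk_cast_congr (G : GraphData R) (prev prev' : G.E) (hpp : prev = prev')
    (p q : R.Alph) (hpq : p = q)
    (h1 : p.1 = some (G.col prev)) (h2 : q.1 = some (G.col prev')) :
    (⟨prev, cast (congrArg R.E h1) p.2⟩ : Σ e : G.E, R.E (some (G.col e))) =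
      ⟨prev', cast (congrArg R.E h2) q.2⟩ := by
  subst hpp; subst hpq; rfl

lemma cast_ini_of_eq (R : ERSPaper.ERS) (p : R.Alph) {z : Option R.Col} (a : R.E z)
    (hp : p = ⟨z, a⟩) {T : Option R.Col} (h : p.1 = T) (h' : z = T) :
    cast (congrArg R.V h) (R.ini p.1 p.2) = cast (congrArg R.V h') (R.ini z a) := by
  subst hp; rfl

lemma cast_fin_of_eq (R : ERSPaper.ERS) (p : R.Alph) {z : Option R.Col} (a : R.E z)
    (hp : p = ⟨z, a⟩) {T : Option R.Col} (h : p.1 = T) (h' : z = T) :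
    cast (congrArg R.V h) (R.fin p.1 p.2) = cast (congrArg R.V h') (R.fin z a) := by
  subst hp; rfl

lemma wordEdge_congr (x y : ℕ → R.Alph) :
    ∀ (m : ℕ) (hx : R.IsWalkUpTo x m) (hy : R.IsWalkUpTo y m),
      (∀ l, l ≤ m → x l = y l) →
      (R.wordEdge x m hx).1 = (R.wordEdge y m hy).1
  | 0, hx, hy, hxy => by
      simp only [ERSPaper.ERS.wordEdge]
      exact cast_snd_congr R (x 0) (y 0) (hxy 0 le_rfl) hx.1 hy.1
  | m + 1, hx, hy, hxy => by
      simp only [ERSPaper.ERS.wordEdge]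
      exact mk_cast_congr (R.fullExp m) _ _
        (wordEdge_congr x y m _ _ (fun l hl => hxy l (Nat.le_succ_of_le hl)))
        (x (m+1)) (y (m+1)) (hxy (m+1) le_rfl)
        ((hx.2 m (Nat.lt_succ_self m)).trans
          (congrArg some (R.wordEdge x m ⟨hx.1, fun l hl => hx.2 l (Nat.lt_succ_of_lt hl)⟩).2.symm))
        ((hy.2 m (Nat.lt_succ_self m)).trans
          (congrArg some (R.wordEdge y m ⟨hy.1, fun l hl => hy.2 l (Nat.lt_succ_of_lt hl)⟩).2.symm))

lemma exists_embedding (x y : ℕ → R.Alph) (m : ℕ)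
    (hx : R.IsWalkUpTo x m) (hy : R.IsWalkUpTo y m)
    (hxy : ∀ l, l < m → x l = y l)
    {z : Option R.Col} (a b : R.E z) (hxm : x m = ⟨z, a⟩) (hym : y m = ⟨z, b⟩) :
    ∃ f : R.V z → (R.fullExp m).V, Function.Injective f ∧
      (R.fullExp m).ι (R.wordEdge x m hx).1 = f (R.ini z a) ∧
      (R.fullExp m).τ (R.wordEdge x m hx).1 = f (R.fin z a) ∧
      (R.fullExp m).ι (R.wordEdge y m hy).1 = f (R.ini z b) ∧
      (R.fullExp m).τ (R.wordEdge y m hy).1 = f (R.fin z b) := by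
  cases m with
  | zero =>
    have hz : z = none := by
      have h := hx.1; rw [hxm] at h; exact h
    refine ⟨cast (congrArg R.V hz), cast_inj_fun _, ?_, ?_, ?_, ?_⟩
    · show R.ini none (cast (congrArg R.E hx.1) (x 0).2) = _
      rw [ini_cast' R hx.1]
      exact cast_ini_of_eq R (x 0) a hxm hx.1 hz
    · show R.fin none (cast (congrArg R.E hx.1) (x 0).2) = _
      rw [fin_cast' R hx.1]
      exact cast_fin_of_eq R (x 0) a hxm hx.1 hz
    · show R.ini none (cast (congrArg R.E hy.1) (y 0).2) = _
      rw [ini_cast' R hy.1]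
      exact cast_ini_of_eq R (y 0) b hym hy.1 hz
    · show R.fin none (cast (congrArg R.E hy.1) (y 0).2) = _
      rw [fin_cast' R hy.1]
      exact cast_fin_of_eq R (y 0) b hym hy.1 hz
  | succ k =>
    have hx' : R.IsWalkUpTo x k := ⟨hx.1, fun l hl => hx.2 l (Nat.lt_succ_of_lt hl)⟩
    have hy' : R.IsWalkUpTo y k := ⟨hy.1, fun l hl => hy.2 l (Nat.lt_succ_of_lt hl)⟩
    set prev := (R.wordEdge x k hx').1 with hprevdef
    have hz : z = some ((R.fullExp k).col prev) := by
      have h1 := hx.2 k (Nat.lt_succ_self k)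
      rw [hxm] at h1
      exact h1.trans (congrArg some (R.wordEdge x k hx').2).symm
    have hxz : (x (k+1)).1 = some ((R.fullExp k).col prev) := by rw [hxm]; exact hz
    have hyz : (y (k+1)).1 = some ((R.fullExp k).col prev) := by rw [hym]; exact hz
    have hxe : (R.wordEdge x (k+1) hx).1 =
        ⟨prev, cast (congrArg R.E hxz) (x (k+1)).2⟩ := by
      rfl
    have hye : (R.wordEdge y (k+1) hy).1 =
        ⟨prev, cast (congrArg R.E hyz) (y (k+1)).2⟩ := by
      simp only [ERSPaper.ERS.wordEdge]
      exact mk_cast_congr (R.fullExp k) _ _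
        (wordEdge_congr y x k hy' hx' (fun l hl => (hxy l (Nat.lt_succ_of_le hl)).symm))
        (y (k+1)) (y (k+1)) rfl
        ((hy.2 k (Nat.lt_succ_self k)).trans
          (congrArg some (R.wordEdge y k hy').2.symm)) hyz
    refine ⟨fun v => R.attach (R.fullExp k) prev (cast (congrArg R.V hz) v),
      fun u v huv => cast_inj_fun _
        (attach_injective (goodG_fullExp k) prev huv), ?_, ?_, ?_, ?_⟩
    · rw [hxe]
      show R.attach (R.fullExp k) prev
        (R.ini _ (cast (congrArg R.E hxz) (x (k+1)).2)) = _
      rw [ini_cast' R hxz]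
      exact congrArg _ (cast_ini_of_eq R (x (k+1)) a hxm hxz hz)
    · rw [hxe]
      show R.attach (R.fullExp k) prev
        (R.fin _ (cast (congrArg R.E hxz) (x (k+1)).2)) = _
      rw [fin_cast' R hxz]
      exact congrArg _ (cast_fin_of_eq R (x (k+1)) a hxm hxz hz)
    · rw [hye]
      show R.attach (R.fullExp k) prev
        (R.ini _ (cast (congrArg R.E hyz) (y (k+1)).2)) = _
      rw [ini_cast' R hyz]
      exact congrArg _ (cast_ini_of_eq R (y (k+1)) b hym hyz hz)
    · rw [hye]
      show R.attach (R.fullExp k) prev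
        (R.fin _ (cast (congrArg R.E hyz) (y (k+1)).2)) = _
      rw [fin_cast' R hyz]
      exact congrArg _ (cast_fin_of_eq R (y (k+1)) b hym hyz hz)
end Aux3
section Aux4
open ERSPaper
variable {R : ERSPaper.ERS}

lemma inQ0_q0 {z : Option R.Col} : (GlState.q0 z : GlState R).inQ0 := trivial

lemma not_inQ0_q1 {i : R.Col} {γ : EType} {j : R.Col} {δ : EType} :
    ¬ (GlState.q1 i γ j δ : GlState R).inQ0 := fun h => h

lemma inQ1_q1 {i : R.Col} {γ : EType} {j : R.Col} {δ : EType} :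
    (GlState.q1 i γ j δ : GlState R).inQ1 := trivial

lemma not_both {s : GlState R} (h0 : s.inQ0) (h1 : s.inQ1) : False := by
  cases s with
  | q0 z => exact h1
  | q1 _ _ _ _ => exact h0

lemma trans_q0_inv {z : Option R.Col} {p : R.Alph × R.Alph} {t : GlState R}
    (h : GlTrans R (.q0 z) p t) :
    (∃ e : R.E z, p = (⟨z, e⟩, ⟨z, e⟩) ∧ t = .q0 (some (R.col z e))) ∨
    (∃ (a b : R.E z) (α β : EType), a ≠ b ∧ p = (⟨z, a⟩, ⟨z, b⟩) ∧
      AdjType (R.ini z a) (R.fin z a) (R.ini z b) (R.fin z b) α β ∧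
      t = .q1 (R.col z a) α (R.col z b) β) := by
  cases h with
  | type0 z e => exact Or.inl ⟨e, rfl, rfl⟩
  | type1 z a b hab h => exact Or.inr ⟨a, b, _, _, hab, rfl, h, rfl⟩

lemma trans_q1_inv {s : GlState R} {p : R.Alph × R.Alph} {t : GlState R}
    (h : GlTrans R s p t) (hs : s.inQ1) : t.inQ1 := by
  cases h with
  | type0 z e => exact hs.elim
  | type1 z a b hab h => exact hs.elim
  | type2 i j γ δ a b hp ha hb => exact trivial

lemma col_of_eq (R : ERSPaper.ERS) (p : R.Alph) {z : Option R.Col} (a : R.E z)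
    (hp : p = ⟨z, a⟩) : R.col p.1 p.2 = R.col z a := by
  subst hp; rfl

end Aux4

/-- Type 1 transition implies adjacency.  If the infinite
sequence `(x₀,y₀)(x₁,y₁)…` is recognized by `Gl_R` (via the run `q`), then
exactly one of the following holds: (1) `x_i = y_i` for all `i` and the run
stays in the sub-automaton `T_R` induced by `Q₀`; or (2) the run features
exactly one Type 1 transition, taking place when processing the first letter
`(x_m,y_m)` with `x_m ≠ y_m`; moreover `x₀…x_m` and `y₀…y_m` are adjacent
edges of the full expansion `E_m`, and the state reached after processing
`(x_m,y_m)` is `q₁(c(x_m),α;c(y_m),β)` where `(α,β)` is the adjacency type of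
`x₀…x_m` and `y₀…y_m` in `E_m` in the sense of the Type 1 rule. -/
theorem type1_transition_implies_adjacency (R : ERS) (hR : R.Expanding)
    (w : ℕ → R.Alph × R.Alph) (q : ℕ → GlState R) (hrun : GlRun R w q) :
    Xor'
      ((∀ i : ℕ, (w i).1 = (w i).2) ∧ ∀ l : ℕ, (q l).inQ0)
      (∃ m : ℕ,
        (w m).1 ≠ (w m).2 ∧ (∀ l < m, (w l).1 = (w l).2) ∧
        (∀ l : ℕ, ((q l).inQ0 ∧ (q (l + 1)).inQ1) ↔ l = m) ∧
        ∃ (hx : R.IsWalkUpTo (fun n => (w n).1) m)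
          (hy : R.IsWalkUpTo (fun n => (w n).2) m),
          (R.fullExp m).Adjacent (R.wordEdge (fun n => (w n).1) m hx).1
            (R.wordEdge (fun n => (w n).2) m hy).1 ∧
          ∃ α β : EType,
            q (m + 1) =
              .q1 (R.col ((w m).1).1 ((w m).1).2) α
                  (R.col ((w m).2).1 ((w m).2).2) β ∧
            AdjType ((R.fullExp m).ι (R.wordEdge (fun n => (w n).1) m hx).1)
                    ((R.fullExp m).τ (R.wordEdge (fun n => (w n).1) m hx).1)
                    ((R.fullExp m).ι (R.wordEdge (fun n => (w n).2) m hy).1)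
                    ((R.fullExp m).τ (R.wordEdge (fun n => (w n).2) m hy).1)
                    α β) := by
  classical
  obtain ⟨hq0, htr⟩ := hrun
  by_cases hall : ∀ l, (q l).inQ0
  · left
    refine ⟨⟨?_, hall⟩, ?_⟩
    · intro i
      have hi := hall i
      cases hqi : q i with
      | q0 z =>
        have h := htr i
        rw [hqi] at h
        rcases trans_q0_inv h with ⟨e, hp, -⟩ | ⟨a, b, α, β, -, -, -, ht⟩
        · rw [hp]
        · exfalso
          have h1 := hall (i + 1)
          rw [ht] at h1
          exact h1
      | q1 i' γ j δ =>
        rw [hqi] at hi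
        exact hi.elim
    · rintro ⟨m, -, -, hiff, -⟩
      have h1 := (hiff m).mpr rfl
      exact not_both (hall (m + 1)) h1.2
  · right
    have hex : ∃ l, ¬ (q l).inQ0 := not_forall.mp hall
    have hk := Nat.find_spec hex
    have hkmin : ∀ l, l < Nat.find hex → (q l).inQ0 :=
      fun l hl => not_not.mp (Nat.find_min hex hl)
    have hk0 : Nat.find hex ≠ 0 := by
      intro h
      rw [h, hq0] at hk
      exact hk inQ0_q0
    obtain ⟨m, hm⟩ := Nat.exists_eq_succ_of_ne_zero hk0
    have hQ0 : ∀ l, l ≤ m → (q l).inQ0 := fun l hl => hkmin l (by omega)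
    have hQ1 : ¬ (q (m + 1)).inQ0 := by
      have : m + 1 = Nat.find hex := hm.symm
      rw [this]; exact hk
    have stateform : ∀ l, (q l).inQ0 →
        q l = .q0 ((w l).1.1) ∧ (w l).1.1 = (w l).2.1 := by
      intro l hl
      cases hql : q l with
      | q0 z =>
        have h := htr l
        rw [hql] at h
        rcases trans_q0_inv h with ⟨e, hp, -⟩ | ⟨a, b, α, β, -, hp, -, -⟩
        · rw [hp]; exact ⟨rfl, rfl⟩
        · rw [hp]; exact ⟨rfl, rfl⟩
      | q1 i' γ j δ =>
        rw [hql] at hl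
        exact hl.elim
    have step : ∀ l, l < m → (w l).1 = (w l).2 ∧
        q (l + 1) = .q0 (some (R.col (w l).1.1 (w l).1.2)) := by
      intro l hl
      obtain ⟨hsf, -⟩ := stateform l (hQ0 l (le_of_lt hl))
      have h := htr l
      rw [hsf] at h
      rcases trans_q0_inv h with ⟨e, hp, ht⟩ | ⟨a, b, α, β, -, -, -, ht⟩
      · constructor
        · rw [hp]
        · rw [ht, col_of_eq R (w l).1 e (congrArg Prod.fst hp)]
      · exfalso
        have h1 := hQ0 (l + 1) (by omega)
        rw [ht] at h1
        exact h1
    have hx0 : ((w 0).1).1 = none ∧ ((w 0).2).1 = none := by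
      have h := htr 0
      rw [hq0] at h
      rcases trans_q0_inv h with ⟨e, hp, -⟩ | ⟨a, b, α, β, -, hp, -, -⟩ <;>
        rw [hp] <;> exact ⟨rfl, rfl⟩
    have hwalkx : R.IsWalkUpTo (fun n => (w n).1) m := by
      refine ⟨hx0.1, fun l hl => ?_⟩
      obtain ⟨-, h2⟩ := step l hl
      obtain ⟨hsf, -⟩ := stateform (l + 1) (hQ0 (l + 1) hl)
      have h3 := h2.symm.trans hsf
      injection h3 with h4
      exact h4.symm
    have hwalky : R.IsWalkUpTo (fun n => (w n).2) m := by
      refine ⟨hx0.2, fun l hl => ?_⟩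
      have hxy := (step l hl).1
      have hx2 := hwalkx.2 l hl
      have hs2 := (stateform (l + 1) (hQ0 (l + 1) hl)).2
      show (w (l + 1)).2.1 = some (R.col (w l).2.1 (w l).2.2)
      rw [← hxy]
      exact hs2.symm.trans hx2
    obtain ⟨hsfm, -⟩ := stateform m (hQ0 m le_rfl)
    have h := htr m
    rw [hsfm] at h
    rcases trans_q0_inv h with ⟨e, -, ht⟩ | ⟨a, b, α, β, hab, hp, hadj, ht⟩
    · exfalso
      apply hQ1
      rw [ht]
      exact inQ0_q0
    · have hxm : (w m).1 = ⟨(w m).1.1, a⟩ := congrArg Prod.fst hp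
      have hym : (w m).2 = ⟨(w m).1.1, b⟩ := congrArg Prod.snd hp
      obtain ⟨f, hf, e1, e2, e3, e4⟩ :=
        exists_embedding (fun n => (w n).1) (fun n => (w n).2) m hwalkx hwalky
          (fun l hl => (step l hl).1) a b hxm hym
      have hafter : ∀ l, m + 1 ≤ l → (q l).inQ1 := by
        intro l hl
        induction l with
        | zero => omega
        | succ n ih =>
          rcases eq_or_lt_of_le (Nat.le_of_succ_le_succ hl) with h' | h'
          · rw [← h', ht]
            exact inQ1_q1
          · exact trans_q1_inv (htr n) (ih h')
      have hAdj : AdjType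
          ((R.fullExp m).ι (R.wordEdge (fun n => (w n).1) m hwalkx).1)
          ((R.fullExp m).τ (R.wordEdge (fun n => (w n).1) m hwalkx).1)
          ((R.fullExp m).ι (R.wordEdge (fun n => (w n).2) m hwalky).1)
          ((R.fullExp m).τ (R.wordEdge (fun n => (w n).2) m hwalky).1) α β := by
        rw [e1, e2, e3, e4]
        exact hadj.map f hf
      constructor
      · refine ⟨m, ?_, fun l hl => (step l hl).1, ?_, hwalkx, hwalky,
          (R.fullExp m).adjacent_of_adjType hAdj, α, β, ?_, hAdj⟩
        · intro hc
          have h5 := hxm.symm.trans (hc.trans hym)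
          injection h5 with h6 h7
          exact hab h7
        · intro l
          constructor
          · rintro ⟨hl0, hl1⟩
            by_contra hne'
            rcases Nat.lt_or_ge l m with h' | h'
            · exact not_both (hQ0 (l + 1) h') hl1
            · exact not_both hl0 (hafter l (by omega))
          · rintro rfl
            refine ⟨hQ0 _ le_rfl, by rw [ht]; exact inQ1_q1⟩
        · rw [ht, col_of_eq R (w m).1 a hxm, col_of_eq R (w m).2 b hym]
      · rintro ⟨-, hallq⟩
        exact hQ1 (hallq (m + 1))

end ERSPaper
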